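/- Let L ⊆ M be fields of characteristic zero with M algebraically closed, and let a(t), b(t) ∈ L[[t]] with ord_t(a − a(0)) = k, ord_t(b) = r, and k − r = n > 0. If s(t) = Σ_{i≥1} σ_i t^i ∈ M[[t]] is a solution of order one of a'(s(t))·s'(t) = n·t^{n−1}·b(s(t)), then σ₁ⁿ ∈ L and σ_i ∈ L(σ₁) for all i > 1, and s is uniquely determined by σ₁. -/

import Mathlib

noncomputable section

variable {M : Type*} [Field M]

/-- composition of formal power series, meaningful when the constant
coefficient of `s` is zero. -/
def pscomp (f s : PowerSeries M) : PowerSeries M :=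
  PowerSeries.mk fun n => ∑ k ∈ Finset.range (n + 1),
    PowerSeries.coeff k f * PowerSeries.coeff n (s ^ k)

open PowerSeries Finset

lemma coeff_derivativeFun' (f : PowerSeries M) (n : ℕ) :
    PowerSeries.coeff n f.derivativeFun = PowerSeries.coeff (n + 1) f * (n + 1) :=
  PowerSeries.coeff_derivative f n

lemma coeff_pscomp (f s : PowerSeries M) (n : ℕ) :
    PowerSeries.coeff n (pscomp f s) = ∑ k ∈ Finset.range (n + 1),
      PowerSeries.coeff k f * PowerSeries.coeff n (s ^ k) := by
  simp [pscomp]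

lemma coeff_mul_lo (f g : PowerSeries M) (p q : ℕ)
    (hf : ∀ i < p, PowerSeries.coeff i f = 0)
    (hg : ∀ i < q, PowerSeries.coeff i g = 0)
    {D : ℕ} (hD : D < p + q) : PowerSeries.coeff D (f * g) = 0 := by
  rw [PowerSeries.coeff_mul]
  apply Finset.sum_eq_zero
  rintro ⟨i, j⟩ hij
  simp only [Finset.HasAntidiagonal.mem_antidiagonal] at hij
  rcases lt_or_ge i p with h | h
  · rw [hf i h, zero_mul]
  · rw [hg j (by omega), mul_zero]

lemma coeff_mul_hi (f g : PowerSeries M) (p q : ℕ)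
    (hf : ∀ i < p, PowerSeries.coeff i f = 0)
    (hg : ∀ i < q, PowerSeries.coeff i g = 0) :
    PowerSeries.coeff (p + q) (f * g) =
      PowerSeries.coeff p f * PowerSeries.coeff q g := by
  rw [PowerSeries.coeff_mul]
  rw [Finset.sum_eq_single (p, q)]
  · intro b hb hne
    simp only [Finset.HasAntidiagonal.mem_antidiagonal] at hb
    rcases lt_or_ge b.1 p with h | h
    · rw [hf b.1 h, zero_mul]
    · rcases lt_or_ge b.2 q with h2 | h2
      · rw [hg b.2 h2, mul_zero]
      · exact absurd (Prod.ext (by omega) (by omega)) hne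
  · intro h
    simp [Finset.mem_antidiagonal] at h

lemma coeff_pow_lo (u : PowerSeries M) (hu0 : PowerSeries.coeff 0 u = 0)
    (j : ℕ) : ∀ D < j, PowerSeries.coeff D (u ^ j) = 0 := by
  induction j with
  | zero => intro D hD; omega
  | succ j ih =>
    intro D hD
    rw [pow_succ]
    exact coeff_mul_lo _ _ j 1 ih (fun i hi => by interval_cases i; exact hu0) (by omega)

lemma coeff_pow_hi (u : PowerSeries M) (hu0 : PowerSeries.coeff 0 u = 0)
    (j : ℕ) : PowerSeries.coeff j (u ^ j) = (PowerSeries.coeff 1 u) ^ j := by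
  induction j with
  | zero => simp
  | succ j ih =>
    rw [pow_succ, pow_succ, ← ih]
    exact coeff_mul_hi _ _ j 1 (coeff_pow_lo u hu0 j)
      (fun i hi => by interval_cases i; exact hu0)

section Diff

lemma coeff_geom_lo (u w : PowerSeries M)
    (hu0 : PowerSeries.coeff 0 u = 0) (hw0 : PowerSeries.coeff 0 w = 0) (j : ℕ) :
    ∀ D < j - 1, PowerSeries.coeff D (∑ i ∈ Finset.range j, u ^ i * w ^ (j - 1 - i)) = 0 := by
  intro D hD
  rw [map_sum]
  apply Finset.sum_eq_zero
  intro i hi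
  simp only [Finset.mem_range] at hi
  exact coeff_mul_lo _ _ i (j - 1 - i) (coeff_pow_lo u hu0 i) (coeff_pow_lo w hw0 (j - 1 - i))
    (by omega)

lemma coeff_sub_lo (u w : PowerSeries M) (m : ℕ)
    (hagree : ∀ i ≤ m, PowerSeries.coeff i u = PowerSeries.coeff i w) :
    ∀ i < m + 1, PowerSeries.coeff i (u - w) = 0 := by
  intro i hi
  rw [map_sub, hagree i (by omega), sub_self]

lemma coeff_pow_diff_lo (u w : PowerSeries M) (m : ℕ)
    (hu0 : PowerSeries.coeff 0 u = 0) (hw0 : PowerSeries.coeff 0 w = 0)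
    (hagree : ∀ i ≤ m, PowerSeries.coeff i u = PowerSeries.coeff i w) (j : ℕ) :
    ∀ D < j + m, PowerSeries.coeff D (u ^ j) = PowerSeries.coeff D (w ^ j) := by
  intro D hD
  rcases Nat.eq_zero_or_pos j with rfl | hj
  · rfl
  have h := (geom_sum₂_mul u w j).symm
  have h2 : PowerSeries.coeff D (u ^ j - w ^ j) = 0 := by
    rw [h]
    exact coeff_mul_lo _ _ (j - 1) (m + 1) (coeff_geom_lo u w hu0 hw0 j)
      (coeff_sub_lo u w m hagree) (by omega)
  rw [map_sub, sub_eq_zero] at h2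
  exact h2

lemma coeff_pow_diff_hi (u w : PowerSeries M) (m : ℕ)
    (hu0 : PowerSeries.coeff 0 u = 0) (hw0 : PowerSeries.coeff 0 w = 0)
    (hagree : ∀ i ≤ m, PowerSeries.coeff i u = PowerSeries.coeff i w)
    (hm : 1 ≤ m) (j : ℕ) :
    PowerSeries.coeff (j + m) (u ^ j) - PowerSeries.coeff (j + m) (w ^ j) =
      (j : M) * (PowerSeries.coeff 1 u) ^ (j - 1) *
        (PowerSeries.coeff (m + 1) u - PowerSeries.coeff (m + 1) w) := by
  rcases Nat.eq_zero_or_pos j with rfl | hj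
  · simp
  have h := (geom_sum₂_mul u w j).symm
  have key : PowerSeries.coeff (j - 1)
      (∑ i ∈ Finset.range j, u ^ i * w ^ (j - 1 - i)) =
      (j : M) * (PowerSeries.coeff 1 u) ^ (j - 1) := by
    rw [map_sum]
    have hw1 : PowerSeries.coeff 1 w = PowerSeries.coeff 1 u := (hagree 1 hm).symm
    have hterm : ∀ i ∈ Finset.range j, PowerSeries.coeff (j - 1) (u ^ i * w ^ (j - 1 - i)) =
        (PowerSeries.coeff 1 u) ^ (j - 1) := by
      intro i hi
      simp only [Finset.mem_range] at hi
      have e : i + (j - 1 - i) = j - 1 := by omega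
      have h1 : PowerSeries.coeff (i + (j - 1 - i)) (u ^ i * w ^ (j - 1 - i)) =
          (PowerSeries.coeff 1 u) ^ i * (PowerSeries.coeff 1 w) ^ (j - 1 - i) := by
        rw [coeff_mul_hi _ _ i (j - 1 - i) (coeff_pow_lo u hu0 i)
          (coeff_pow_lo w hw0 (j - 1 - i)), coeff_pow_hi u hu0, coeff_pow_hi w hw0]
      rw [e] at h1
      rw [h1, hw1, ← pow_add, e]
    rw [Finset.sum_congr rfl hterm, Finset.sum_const, Finset.card_range, nsmul_eq_mul]
  have hD : j + m = (j - 1) + (m + 1) := by omega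
  rw [← map_sub, h, hD, coeff_mul_hi _ _ (j - 1) (m + 1)
    (coeff_geom_lo u w hu0 hw0 j) (coeff_sub_lo u w m hagree), key, map_sub]

end Diff

section Comp

lemma pscomp_lo (f u : PowerSeries M) (p : ℕ)
    (hf : ∀ j < p, PowerSeries.coeff j f = 0)
    (hu0 : PowerSeries.coeff 0 u = 0) :
    ∀ D < p, PowerSeries.coeff D (pscomp f u) = 0 := by
  intro D hD
  rw [coeff_pscomp]
  apply Finset.sum_eq_zero
  intro j hj
  simp only [Finset.mem_range] at hj
  rw [hf j (by omega), zero_mul]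

lemma pscomp_hi (f u : PowerSeries M) (p : ℕ)
    (hf : ∀ j < p, PowerSeries.coeff j f = 0)
    (hu0 : PowerSeries.coeff 0 u = 0) :
    PowerSeries.coeff p (pscomp f u) =
      PowerSeries.coeff p f * (PowerSeries.coeff 1 u) ^ p := by
  rw [coeff_pscomp]
  rw [Finset.sum_eq_single p]
  · rw [coeff_pow_hi u hu0]
  · intro j hj hne
    simp only [Finset.mem_range] at hj
    rw [hf j (by omega), zero_mul]
  · intro h
    simp at h

lemma pscomp_diff_lo (f u w : PowerSeries M) (p m : ℕ)
    (hf : ∀ j < p, PowerSeries.coeff j f = 0)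
    (hu0 : PowerSeries.coeff 0 u = 0) (hw0 : PowerSeries.coeff 0 w = 0)
    (hagree : ∀ i ≤ m, PowerSeries.coeff i u = PowerSeries.coeff i w) :
    ∀ D < p + m, PowerSeries.coeff D (pscomp f u) = PowerSeries.coeff D (pscomp f w) := by
  intro D hD
  rw [coeff_pscomp, coeff_pscomp]
  apply Finset.sum_congr rfl
  intro j hj
  rcases lt_or_ge j p with h | h
  · rw [hf j h, zero_mul, zero_mul]
  · rw [coeff_pow_diff_lo u w m hu0 hw0 hagree j D (by omega)]

lemma pscomp_diff_hi (f u w : PowerSeries M) (p m : ℕ)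
    (hf : ∀ j < p, PowerSeries.coeff j f = 0)
    (hu0 : PowerSeries.coeff 0 u = 0) (hw0 : PowerSeries.coeff 0 w = 0)
    (hagree : ∀ i ≤ m, PowerSeries.coeff i u = PowerSeries.coeff i w)
    (hm : 1 ≤ m) :
    PowerSeries.coeff (p + m) (pscomp f u) - PowerSeries.coeff (p + m) (pscomp f w) =
      PowerSeries.coeff p f * ((p : M) * (PowerSeries.coeff 1 u) ^ (p - 1) *
        (PowerSeries.coeff (m + 1) u - PowerSeries.coeff (m + 1) w)) := by
  rw [coeff_pscomp, coeff_pscomp, ← Finset.sum_sub_distrib]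
  rw [Finset.sum_eq_single p]
  · rw [← mul_sub, coeff_pow_diff_hi u w m hu0 hw0 hagree hm p]
  · intro j hj hne
    simp only [Finset.mem_range] at hj
    rcases lt_or_ge j p with h | h
    · rw [hf j h, zero_mul, zero_mul, sub_self]
    · rw [coeff_pow_diff_lo u w m hu0 hw0 hagree j (p + m) (by omega), sub_self]
  · intro h
    simp only [Finset.mem_range] at h
    omega

end Comp

section Prod

lemma coeff_zero_deriv (u : PowerSeries M) :
    PowerSeries.coeff 0 u.derivativeFun = PowerSeries.coeff 1 u := by
  rw [coeff_derivativeFun']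
  simp

lemma prod_lead (f u : PowerSeries M) (k' : ℕ)
    (hf : ∀ j < k', PowerSeries.coeff j f = 0)
    (hu0 : PowerSeries.coeff 0 u = 0) :
    PowerSeries.coeff k' (pscomp f u * u.derivativeFun) =
      PowerSeries.coeff k' f * (PowerSeries.coeff 1 u) ^ k' *
        PowerSeries.coeff 1 u := by
  have h := coeff_mul_hi (pscomp f u) u.derivativeFun k' 0
    (pscomp_lo f u k' hf hu0) (fun i hi => by omega)
  rw [Nat.add_zero] at h
  rw [h, pscomp_hi f u k' hf hu0, coeff_zero_deriv]

lemma prod_diff (f u w : PowerSeries M) (k' m : ℕ) (hm : 1 ≤ m)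
    (hf : ∀ j < k', PowerSeries.coeff j f = 0)
    (hu0 : PowerSeries.coeff 0 u = 0) (hw0 : PowerSeries.coeff 0 w = 0)
    (hagree : ∀ i ≤ m, PowerSeries.coeff i u = PowerSeries.coeff i w) :
    PowerSeries.coeff (k' + m) (pscomp f u * u.derivativeFun) -
      PowerSeries.coeff (k' + m) (pscomp f w * w.derivativeFun) =
      PowerSeries.coeff k' f * (((k' : M) + m + 1) * (PowerSeries.coeff 1 u) ^ k') *
        (PowerSeries.coeff (m + 1) u - PowerSeries.coeff (m + 1) w) := by
  set A := pscomp f u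
  set B := pscomp f w
  set U := u.derivativeFun
  set W := w.derivativeFun
  set σ := PowerSeries.coeff 1 u with hσdef
  set δ := PowerSeries.coeff (m + 1) u - PowerSeries.coeff (m + 1) w with hδdef
  have hid : A * U - B * W = A * (U - W) + (A - B) * W := by ring
  have hUW : ∀ i < m, PowerSeries.coeff i (U - W) = 0 := by
    intro i hi
    rw [map_sub, coeff_derivativeFun', coeff_derivativeFun',
      hagree (i + 1) (by omega), sub_self]
  have h1 : PowerSeries.coeff (k' + m) (A * (U - W)) =
      PowerSeries.coeff k' f * σ ^ k' * (((m : M) + 1) * δ) := by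
    rw [coeff_mul_hi A (U - W) k' m (pscomp_lo f u k' hf hu0) hUW,
      pscomp_hi f u k' hf hu0]
    rw [map_sub, coeff_derivativeFun', coeff_derivativeFun']
    push_cast
    ring
  have h2 : PowerSeries.coeff (k' + m) ((A - B) * W) =
      PowerSeries.coeff k' f * ((k' : M) * σ ^ (k' - 1) * δ) * σ := by
    have hAB : ∀ i < k' + m, PowerSeries.coeff i (A - B) = 0 := by
      intro i hi
      rw [map_sub, pscomp_diff_lo f u w k' m hf hu0 hw0 hagree i hi, sub_self]
    have h := coeff_mul_hi (A - B) W (k' + m) 0 hAB (fun i hi => by omega)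
    rw [Nat.add_zero] at h
    rw [h, map_sub, pscomp_diff_hi f u w k' m hf hu0 hw0 hagree hm, coeff_zero_deriv,
      ← hagree 1 hm]
  have hσk : (k' : M) * σ ^ (k' - 1) * σ = (k' : M) * σ ^ k' := by
    rcases k' with _ | t
    · simp
    · rw [Nat.succ_sub_one, pow_succ]
      ring
  calc PowerSeries.coeff (k' + m) (A * U) - PowerSeries.coeff (k' + m) (B * W)
      = PowerSeries.coeff (k' + m) (A * (U - W) + (A - B) * W) := by
        rw [← hid, map_sub]
    _ = PowerSeries.coeff k' f * σ ^ k' * (((m : M) + 1) * δ) +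
        PowerSeries.coeff k' f * ((k' : M) * σ ^ (k' - 1) * δ) * σ := by
        rw [map_add, h1, h2]
    _ = PowerSeries.coeff k' f * (((k' : M) + m + 1) * σ ^ k') * δ := by
        have : PowerSeries.coeff k' f * ((k' : M) * σ ^ (k' - 1) * δ) * σ =
            PowerSeries.coeff k' f * (((k' : M) * σ ^ (k' - 1) * σ) * δ) := by ring
        rw [this, hσk]
        ring

end Prod

section Mem

variable (K : Subfield M)

lemma mem_coeff_mul (f g : PowerSeries M) (hf : ∀ i, PowerSeries.coeff i f ∈ K)
    (hg : ∀ i, PowerSeries.coeff i g ∈ K) :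
    ∀ i, PowerSeries.coeff i (f * g) ∈ K := by
  intro i
  rw [PowerSeries.coeff_mul]
  exact sum_mem fun p _ => K.mul_mem (hf _) (hg _)

lemma mem_coeff_pow (f : PowerSeries M) (hf : ∀ i, PowerSeries.coeff i f ∈ K) (j : ℕ) :
    ∀ i, PowerSeries.coeff i (f ^ j) ∈ K := by
  induction j with
  | zero =>
    intro i
    rw [pow_zero, PowerSeries.coeff_one]
    split <;> simp [K.one_mem, K.zero_mem]
  | succ j ih =>
    intro i
    rw [pow_succ]
    exact mem_coeff_mul K _ _ ih hf i

lemma mem_coeff_pscomp (f g : PowerSeries M) (hf : ∀ i, PowerSeries.coeff i f ∈ K)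
    (hg : ∀ i, PowerSeries.coeff i g ∈ K) :
    ∀ i, PowerSeries.coeff i (pscomp f g) ∈ K := by
  intro i
  rw [coeff_pscomp]
  exact sum_mem fun j _ => K.mul_mem (hf _) (mem_coeff_pow K g hg j _)

lemma mem_coeff_deriv (f : PowerSeries M) (hf : ∀ i, PowerSeries.coeff i f ∈ K) :
    ∀ i, PowerSeries.coeff i f.derivativeFun ∈ K := by
  intro i
  rw [coeff_derivativeFun']
  refine K.mul_mem (hf _) ?_
  have : ((i : M) + 1) = ((i + 1 : ℕ) : M) := by push_cast; ring
  rw [this]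
  exact natCast_mem K _

lemma mem_coeff_natCast_X_pow (c e : ℕ) :
    ∀ i, PowerSeries.coeff i ((c : PowerSeries M) * PowerSeries.X ^ e) ∈ K := by
  intro i
  rw [← map_natCast (PowerSeries.C (R := M)) c, PowerSeries.coeff_C_mul, PowerSeries.coeff_X_pow]
  split <;> simp [natCast_mem K, K.zero_mem]

end Mem

/-- **Rationality and uniqueness of the solutions of the associated equation.**
Let `L ⊆ M` be fields of characteristic zero with `M` algebraically closed, and
let `a, b ∈ L[[t]]` with `ord_t(a − a(0)) = k`, `ord_t(b) = r` and
`k − r = n > 0`.  If `s(t) = Σ_{i≥1} σ_i t^i ∈ M[[t]]` is a solution of order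
one of `a'(s(t)) · s'(t) = n · t^{n−1} · b(s(t))`, then `σ₁ⁿ ∈ L`,
`σ_i ∈ L(σ₁)` for all `i > 1`, and `s` is uniquely determined by `σ₁`. -/
theorem associated_equation_solution_coefficients
    [IsAlgClosed M] [CharZero M] (L : Subfield M)
    (a b : PowerSeries M)
    (ha : ∀ i : ℕ, PowerSeries.coeff i a ∈ L)
    (hb : ∀ i : ℕ, PowerSeries.coeff i b ∈ L)
    (k r n : ℕ)
    (hk : (a - PowerSeries.C (PowerSeries.constantCoeff a)).order = k)
    (hr : b.order = r)
    (hn : (k : ℤ) - r = n) (hnpos : 0 < n)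
    (s : PowerSeries M)
    (hs0 : PowerSeries.constantCoeff s = 0)
    (hs1 : PowerSeries.coeff 1 s ≠ 0)
    (hsol : pscomp a.derivativeFun s * s.derivativeFun =
      (n : PowerSeries M) * PowerSeries.X ^ (n - 1) * pscomp b s) :
    (PowerSeries.coeff 1 s) ^ n ∈ L ∧
    (∀ i : ℕ, 1 < i →
      PowerSeries.coeff i s ∈
        Subfield.closure ((L : Set M) ∪ {PowerSeries.coeff 1 s})) ∧
    (∀ s' : PowerSeries M,
      PowerSeries.constantCoeff s' = 0 →
      pscomp a.derivativeFun s' * s'.derivativeFun =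
        (n : PowerSeries M) * PowerSeries.X ^ (n - 1) * pscomp b s' →
      PowerSeries.coeff 1 s' = PowerSeries.coeff 1 s → s' = s) := by
  classical
  obtain ⟨n', rfl⟩ : ∃ n', n = n' + 1 := ⟨n - 1, by omega⟩
  simp only [Nat.add_sub_cancel] at hsol
  set k' := n' + r with hk'
  have hkk : k = k' + 1 := by omega
  rw [PowerSeries.order_eq_nat] at hk hr
  obtain ⟨hka0, hkalow⟩ := hk
  obtain ⟨hbr, hbz'⟩ := hr
  have hbz : ∀ j < r, PowerSeries.coeff j b = 0 := fun j hj => hbz' j hj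
  have hak : PowerSeries.coeff k a ≠ 0 := by
    rwa [map_sub, PowerSeries.coeff_C, if_neg (by omega), sub_zero] at hka0
  have haz : ∀ j, 1 ≤ j → j < k → PowerSeries.coeff j a = 0 := by
    intro j h1 h2
    have h := hkalow j h2
    rwa [map_sub, PowerSeries.coeff_C, if_neg (by omega), sub_zero] at h
  have hs0' : PowerSeries.coeff 0 s = 0 := by
    rwa [PowerSeries.coeff_zero_eq_constantCoeff_apply]
  set σ := PowerSeries.coeff 1 s with hσdef
  have hA : ∀ j < k', PowerSeries.coeff j a.derivativeFun = 0 := by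
    intro j hj
    rw [coeff_derivativeFun', haz (j + 1) (by omega) (by omega), zero_mul]
  have hAk : PowerSeries.coeff k' a.derivativeFun =
      PowerSeries.coeff k a * ((k' + 1 : ℕ) : M) := by
    rw [coeff_derivativeFun', ← hkk]
    norm_cast
    rw [hkk]
  have hR : ∀ (h : PowerSeries M) (D : ℕ),
      PowerSeries.coeff (n' + D)
        (((n' + 1 : ℕ) : PowerSeries M) * PowerSeries.X ^ n' * h) =
        ((n' + 1 : ℕ) : M) * PowerSeries.coeff D h := by
    intro h D
    rw [mul_assoc, ← map_natCast (PowerSeries.C (R := M)) (n' + 1), PowerSeries.coeff_C_mul,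
      add_comm n' D, PowerSeries.coeff_X_pow_mul]
  have hsolc := fun N => congrArg (PowerSeries.coeff N) hsol
  -- leading coefficient equation
  have E1 : PowerSeries.coeff k a * ((k' + 1 : ℕ) : M) * σ ^ (k' + 1) =
      ((n' + 1 : ℕ) : M) * (PowerSeries.coeff r b * σ ^ r) := by
    have h := hsolc k'
    rw [prod_lead a.derivativeFun s k' hA hs0', hAk] at h
    have e : k' + 0 = n' + r := by omega
    rw [show k' = n' + r from hk', hR (pscomp b s) r,
      pscomp_hi b s r hbz hs0'] at h
    rw [pow_succ]
    linear_combination h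
  have E2 : PowerSeries.coeff k a * ((k' + 1 : ℕ) : M) * σ ^ (n' + 1) =
      ((n' + 1 : ℕ) : M) * PowerSeries.coeff r b := by
    apply mul_right_cancel₀ (pow_ne_zero r hs1)
    calc PowerSeries.coeff k a * ((k' + 1 : ℕ) : M) * σ ^ (n' + 1) * σ ^ r
        = PowerSeries.coeff k a * ((k' + 1 : ℕ) : M) * σ ^ (k' + 1) := by
          rw [mul_assoc, ← pow_add]
          congr 2
          omega
      _ = ((n' + 1 : ℕ) : M) * (PowerSeries.coeff r b * σ ^ r) := E1
      _ = ((n' + 1 : ℕ) : M) * PowerSeries.coeff r b * σ ^ r := by ring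
  have part1 : σ ^ (n' + 1) ∈ L := by
    have hα : ((k' + 1 : ℕ) : M) * PowerSeries.coeff k a ≠ 0 :=
      mul_ne_zero (Nat.cast_ne_zero.2 (by omega)) hak
    have hσn : σ ^ (n' + 1) = ((n' + 1 : ℕ) : M) * PowerSeries.coeff r b /
        (((k' + 1 : ℕ) : M) * PowerSeries.coeff k a) := by
      rw [eq_div_iff hα]
      linear_combination E2
    rw [hσn]
    exact L.div_mem (L.mul_mem (natCast_mem L _) (hb r))
      (L.mul_mem (natCast_mem L _) (ha k))
  -- value of the linear coefficient
  have hkc : (k' : M) = (n' : M) + r := by rw [hk']; push_cast; ring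
  have hcval : ∀ m : ℕ,
      PowerSeries.coeff k' a.derivativeFun * (((k' : M) + m + 1) * σ ^ k') -
        ((n' + 1 : ℕ) : M) * (PowerSeries.coeff r b * ((r : M) * σ ^ (r - 1))) =
      ((k' + 1 : ℕ) : M) * PowerSeries.coeff k a * σ ^ k' * ((n' : M) + m + 1) := by
    intro m
    rw [hAk]
    rcases Nat.eq_zero_or_pos r with hr0 | hr1
    · subst hr0
      rw [hkc]
      push_cast
      ring
    · have hσk : σ ^ k' = σ ^ (n' + 1) * σ ^ (r - 1) := by
        rw [← pow_add]
        congr 1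
        omega
      rw [hkc, hσk]
      linear_combination (r : M) * σ ^ (r - 1) * E2
  have hcne : ∀ m : ℕ,
      ((k' + 1 : ℕ) : M) * PowerSeries.coeff k a * σ ^ k' * ((n' : M) + m + 1) ≠ 0 := by
    intro m
    apply mul_ne_zero
    apply mul_ne_zero
    apply mul_ne_zero
    · exact Nat.cast_ne_zero.2 (by omega)
    · exact hak
    · exact pow_ne_zero _ hs1
    · have : ((n' : M) + m + 1) = ((n' + m + 1 : ℕ) : M) := by push_cast; ring
      rw [this]
      exact Nat.cast_ne_zero.2 (by omega)
  -- the key linear difference formula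
  have key : ∀ (m : ℕ), 1 ≤ m → ∀ u w : PowerSeries M,
      PowerSeries.coeff 0 u = 0 → PowerSeries.coeff 0 w = 0 →
      (∀ i ≤ m, PowerSeries.coeff i u = PowerSeries.coeff i w) →
      PowerSeries.coeff 1 u = σ →
      (PowerSeries.coeff (k' + m) (pscomp a.derivativeFun u * u.derivativeFun) -
        PowerSeries.coeff (k' + m)
          (((n' + 1 : ℕ) : PowerSeries M) * PowerSeries.X ^ n' * pscomp b u)) -
      (PowerSeries.coeff (k' + m) (pscomp a.derivativeFun w * w.derivativeFun) -
        PowerSeries.coeff (k' + m)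
          (((n' + 1 : ℕ) : PowerSeries M) * PowerSeries.X ^ n' * pscomp b w)) =
      ((k' + 1 : ℕ) : M) * PowerSeries.coeff k a * σ ^ k' * ((n' : M) + m + 1) *
        (PowerSeries.coeff (m + 1) u - PowerSeries.coeff (m + 1) w) := by
    intro m hm u w hu0 hw0 hagree hu1
    have h1 := prod_diff a.derivativeFun u w k' m hm hA hu0 hw0 hagree
    rw [hu1] at h1
    have h2 := pscomp_diff_hi b u w r m hbz hu0 hw0 hagree hm
    rw [hu1] at h2
    have hq : ∀ v : PowerSeries M,
        PowerSeries.coeff (k' + m)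
          (((n' + 1 : ℕ) : PowerSeries M) * PowerSeries.X ^ n' * pscomp b v) =
        ((n' + 1 : ℕ) : M) * PowerSeries.coeff (r + m) (pscomp b v) := by
      intro v
      have e : k' + m = n' + (r + m) := by omega
      rw [e, hR]
    rw [hq u, hq w]
    linear_combination h1 - ((n' + 1 : ℕ) : M) * h2 +
      hcval m * (PowerSeries.coeff (m + 1) u - PowerSeries.coeff (m + 1) w)
  set K := Subfield.closure ((L : Set M) ∪ {σ}) with hK
  have hLK : ∀ x ∈ L, x ∈ K := fun x hx => Subfield.subset_closure (Or.inl hx)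
  have hσK : σ ∈ K := Subfield.subset_closure (Or.inr rfl)
  -- membership of all coefficients of s
  have hmem : ∀ i, PowerSeries.coeff i s ∈ K := by
    intro i
    induction i using Nat.strong_induction_on with
    | _ i ih =>
      match i with
      | 0 => rw [hs0']; exact K.zero_mem
      | 1 => exact hσK
      | (m + 2) =>
        set m1 := m + 1 with hm1
        have hm1le : 1 ≤ m1 := by omega
        set w : PowerSeries M := PowerSeries.mk
          (fun j => if j ≤ m1 then PowerSeries.coeff j s else 0) with hw
        have hwc : ∀ j, PowerSeries.coeff j w =
            if j ≤ m1 then PowerSeries.coeff j s else 0 := by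
          intro j; rw [hw, PowerSeries.coeff_mk]
        have hw0 : PowerSeries.coeff 0 w = 0 := by
          rw [hwc, if_pos (by omega), hs0']
        have hagree : ∀ j ≤ m1, PowerSeries.coeff j s = PowerSeries.coeff j w := by
          intro j hj; rw [hwc, if_pos hj]
        have hwtop : PowerSeries.coeff (m1 + 1) w = 0 := by
          rw [hwc, if_neg (by omega)]
        have hwK : ∀ j, PowerSeries.coeff j w ∈ K := by
          intro j
          rw [hwc]
          split
          · exact ih j (by omega)
          · exact K.zero_mem
        have hkey := key m1 hm1le s w hs0' hw0 hagree rfl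
        have hzero : PowerSeries.coeff (k' + m1)
            (pscomp a.derivativeFun s * s.derivativeFun) -
            PowerSeries.coeff (k' + m1)
              (((n' + 1 : ℕ) : PowerSeries M) * PowerSeries.X ^ n' * pscomp b s) = 0 := by
          rw [hsolc (k' + m1)]
          exact sub_self _
        rw [hzero, hwtop, zero_sub, sub_zero] at hkey
        have hPw : PowerSeries.coeff (k' + m1)
            (pscomp a.derivativeFun w * w.derivativeFun) ∈ K :=
          mem_coeff_mul K _ _
            (mem_coeff_pscomp K _ _ (mem_coeff_deriv K a (fun j => hLK _ (ha j))) hwK)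
            (mem_coeff_deriv K w hwK) _
        have hQw : PowerSeries.coeff (k' + m1)
            (((n' + 1 : ℕ) : PowerSeries M) * PowerSeries.X ^ n' * pscomp b w) ∈ K :=
          mem_coeff_mul K _ _ (mem_coeff_natCast_X_pow K (n' + 1) n')
            (mem_coeff_pscomp K _ _ (fun j => hLK _ (hb j)) hwK) _
        have hcK : ((k' + 1 : ℕ) : M) * PowerSeries.coeff k a * σ ^ k' *
            ((n' : M) + m1 + 1) ∈ K := by
          refine K.mul_mem (K.mul_mem (K.mul_mem (natCast_mem K _) (hLK _ (ha k)))
            (K.pow_mem hσK k')) ?_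
          exact K.add_mem (K.add_mem (natCast_mem K _) (natCast_mem K _)) K.one_mem
        have hval : PowerSeries.coeff (m + 2) s =
            (PowerSeries.coeff (k' + m1)
              (((n' + 1 : ℕ) : PowerSeries M) * PowerSeries.X ^ n' * pscomp b w) -
             PowerSeries.coeff (k' + m1)
              (pscomp a.derivativeFun w * w.derivativeFun)) /
            (((k' + 1 : ℕ) : M) * PowerSeries.coeff k a * σ ^ k' *
              ((n' : M) + m1 + 1)) := by
          rw [eq_div_iff (hcne m1)]
          have he2 : m1 + 1 = m + 2 := by omega
          rw [he2] at hkey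
          linear_combination -hkey
        rw [hval]
        exact K.div_mem (K.sub_mem hQw hPw) hcK
  refine ⟨part1, fun i hi => hmem i, ?_⟩
  -- uniqueness
  intro s' hs0s' hsol' hs1'
  simp only [Nat.add_sub_cancel] at hsol'
  have hs0c : PowerSeries.coeff 0 s' = 0 := by
    rwa [PowerSeries.coeff_zero_eq_constantCoeff_apply]
  have hsolc' := fun N => congrArg (PowerSeries.coeff N) hsol'
  have hall : ∀ i, PowerSeries.coeff i s' = PowerSeries.coeff i s := by
    intro i
    induction i using Nat.strong_induction_on with
    | _ i ih =>
      match i with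
      | 0 => rw [hs0c, hs0']
      | 1 => exact hs1'
      | (m + 2) =>
        set m1 := m + 1 with hm1
        have hm1le : 1 ≤ m1 := by omega
        have hagree : ∀ j ≤ m1, PowerSeries.coeff j s' = PowerSeries.coeff j s := by
          intro j hj
          exact ih j (by omega)
        have hkey := key m1 hm1le s' s hs0c hs0' hagree hs1'
        have hz1 : PowerSeries.coeff (k' + m1)
            (pscomp a.derivativeFun s' * s'.derivativeFun) -
            PowerSeries.coeff (k' + m1)
              (((n' + 1 : ℕ) : PowerSeries M) * PowerSeries.X ^ n' * pscomp b s') = 0 := by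
          rw [hsolc' (k' + m1)]; exact sub_self _
        have hz2 : PowerSeries.coeff (k' + m1)
            (pscomp a.derivativeFun s * s.derivativeFun) -
            PowerSeries.coeff (k' + m1)
              (((n' + 1 : ℕ) : PowerSeries M) * PowerSeries.X ^ n' * pscomp b s) = 0 := by
          rw [hsolc (k' + m1)]; exact sub_self _
        rw [hz1, hz2, sub_self] at hkey
        have hzz := (mul_eq_zero.mp hkey.symm).resolve_left (hcne m1)
        have he2 : m1 + 1 = m + 2 := by omega
        rw [he2] at hzz
        exact sub_eq_zero.mp hzz
  exact PowerSeries.ext hall
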